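/- With f and g as in the previous example on ℝ³, the adjoint path p(t) ≡ (0, −2, 1) along the trajectory x̄(t) = (0, 0, −4 + t) satisfies p(t)·[f,g](x̄(t)) = 0 for all t, while min{ p(t)·v : v ∈ [g,[f,g]]_set(x̄(t)) } = 4 > 0; hence the step-3 nonsmooth Legendre–Clebsch necessary condition 0 ≥ min{ p(t)·[g,[f,g]]_set(x̄(t)) } fails. -/

import Mathlib

open Set Filter Topology

/-- The pointwise Lie bracket `[X,Y] = DY·X − DX·Y` on ℝ³ = ℝ×ℝ×ℝ. -/
noncomputable def lieBracket (X Y : ℝ × ℝ × ℝ → ℝ × ℝ × ℝ) :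
    ℝ × ℝ × ℝ → ℝ × ℝ × ℝ :=
  fun x => fderiv ℝ Y x (X x) - fderiv ℝ X x (Y x)

/-- The step-3 set-valued bracket `[Z,[X,Y]]_set`. -/
noncomputable def setLieBracket3 (X Y Z : ℝ × ℝ × ℝ → ℝ × ℝ × ℝ) (x : ℝ × ℝ × ℝ) :
    Set (ℝ × ℝ × ℝ) :=
  convexHull ℝ {v | ∃ u w : ℕ → ℝ × ℝ × ℝ,
    (∀ k, DifferentiableAt ℝ (lieBracket X Y) (u k)) ∧
    (∀ k, DifferentiableAt ℝ Z (w k)) ∧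
    Tendsto u atTop (𝓝 x) ∧ Tendsto w atTop (𝓝 x) ∧
    Tendsto (fun k =>
      fderiv ℝ (lieBracket X Y) (u k) (Z (w k)) -
      fderiv ℝ Z (w k) (lieBracket X Y (u k))) atTop (𝓝 v)}

noncomputable def fEx : ℝ × ℝ × ℝ → ℝ × ℝ × ℝ :=
  fun x => (0, (if x.1 < 0 then (3/2) * x.1^2 else x.1^2, 1))

def gEx : ℝ × ℝ × ℝ → ℝ × ℝ × ℝ := fun _ => (1, (0, 0))

/-- The constant adjoint covector `p = (0, −2, 1)` acting on ℝ³. -/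
def pEx (v : ℝ × ℝ × ℝ) : ℝ := 0 * v.1 + (-2) * v.2.1 + 1 * v.2.2

/-- The reference trajectory `x̄(t) = (0, 0, −4 + t)`. -/
def xbar (t : ℝ) : ℝ × ℝ × ℝ := (0, (0, -4 + t))

/-! ### Auxiliary material -/

noncomputable def phiAux (s : ℝ) : ℝ := if s < 0 then (3/2) * s^2 else s^2

noncomputable def psiAux (s : ℝ) : ℝ := if s < 0 then 3*s else 2*s

lemma hasDerivAt_phiAux (a : ℝ) : HasDerivAt phiAux (psiAux a) a := by
  rcases lt_trichotomy a 0 with h | h | h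
  · have h1 : HasDerivAt (fun s : ℝ => (3/2) * s^2) (3 * a) a := by
      have := (hasDerivAt_pow 2 a).const_mul (3/2 : ℝ)
      refine this.congr_deriv ?_
      push_cast; ring
    have : HasDerivAt phiAux (3 * a) a := by
      refine h1.congr_of_eventuallyEq ?_
      filter_upwards [eventually_lt_nhds h] with s hs
      simp [phiAux, hs]
    simpa [psiAux, h] using this
  · subst h
    rw [hasDerivAt_iff_isLittleO]
    have hO : (fun s : ℝ => phiAux s) =O[𝓝 0] (fun s : ℝ => s ^ 2) := by
      rw [Asymptotics.isBigO_iff]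
      refine ⟨3/2, Filter.Eventually.of_forall fun s => ?_⟩
      rcases lt_or_ge s 0 with hs | hs
      · simp only [phiAux, hs, if_true, Real.norm_eq_abs, abs_of_nonneg (sq_nonneg s),
          abs_of_nonneg (by positivity : (0:ℝ) ≤ 3/2 * s^2), le_refl]
      · simp only [phiAux, not_lt.mpr hs, if_false, Real.norm_eq_abs,
          abs_of_nonneg (sq_nonneg s)]
        nlinarith [sq_nonneg s]
    have ho : (fun s : ℝ => phiAux s) =o[𝓝 0] (fun s : ℝ => s) :=
      hO.trans_isLittleO (Asymptotics.isLittleO_pow_id (by norm_num))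
    simpa [phiAux, psiAux] using ho
  · have h1 : HasDerivAt (fun s : ℝ => s^2) (2 * a) a := by
      simpa [mul_comm] using hasDerivAt_pow 2 a
    have : HasDerivAt phiAux (2 * a) a := by
      refine h1.congr_of_eventuallyEq ?_
      filter_upwards [eventually_gt_nhds h] with s hs
      simp [phiAux, not_lt.mpr hs.le]
    simpa [psiAux, not_lt.mpr h.le] using this

noncomputable def fst3 : (ℝ × ℝ × ℝ) →L[ℝ] ℝ := ContinuousLinearMap.fst ℝ ℝ (ℝ × ℝ)

noncomputable def Dmap (c : ℝ) : (ℝ × ℝ × ℝ) →L[ℝ] ℝ × ℝ × ℝ :=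
  ContinuousLinearMap.prod 0 (ContinuousLinearMap.prod (c • fst3) 0)

lemma hasFDerivAt_fEx (x : ℝ × ℝ × ℝ) : HasFDerivAt fEx (Dmap (psiAux x.1)) x := by
  have h1 : HasFDerivAt (fun y : ℝ × ℝ × ℝ => phiAux y.1) (psiAux x.1 • fst3) x :=
    (hasDerivAt_phiAux x.1).comp_hasFDerivAt x (hasFDerivAt_fst)
  exact (hasFDerivAt_const (0:ℝ) x).prodMk (h1.prodMk (hasFDerivAt_const (1:ℝ) x))

lemma lieBracket_fg (x : ℝ × ℝ × ℝ) :
    lieBracket fEx gEx x = (0, (-psiAux x.1, 0)) := by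
  have hg : fderiv ℝ gEx x = 0 := fderiv_const_apply _
  have hf : fderiv ℝ fEx x = Dmap (psiAux x.1) := (hasFDerivAt_fEx x).fderiv
  simp [lieBracket, hg, hf, Dmap, fst3, gEx, Prod.ext_iff]

lemma hasFDerivAt_lieBracket {x : ℝ × ℝ × ℝ} {c : ℝ}
    (h : ∀ᶠ y in 𝓝 x, psiAux y.1 = c * y.1) :
    HasFDerivAt (lieBracket fEx gEx) (Dmap (-c)) x := by
  have hl : HasFDerivAt (fun y : ℝ × ℝ × ℝ => ((0:ℝ), (-c * y.1, (0:ℝ)))) (Dmap (-c)) x :=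
    (hasFDerivAt_const (0:ℝ) x).prodMk
      ((((-c) • fst3).hasFDerivAt (x := x)).prodMk (hasFDerivAt_const (0:ℝ) x))
  refine hl.congr_of_eventuallyEq ?_
  filter_upwards [h] with y hy
  rw [lieBracket_fg, hy]
  norm_num

lemma hasFDerivAt_lieBracket_neg {x : ℝ × ℝ × ℝ} (h : x.1 < 0) :
    HasFDerivAt (lieBracket fEx gEx) (Dmap (-3)) x := by
  apply hasFDerivAt_lieBracket
  have : ∀ᶠ y in 𝓝 x, y.1 < 0 :=
    (continuous_fst.continuousAt (x := x)).eventually_lt continuousAt_const h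
  filter_upwards [this] with y hy
  simp [psiAux, hy]

lemma hasFDerivAt_lieBracket_pos {x : ℝ × ℝ × ℝ} (h : 0 < x.1) :
    HasFDerivAt (lieBracket fEx gEx) (Dmap (-2)) x := by
  apply hasFDerivAt_lieBracket
  have : ∀ᶠ y in 𝓝 x, 0 < y.1 :=
    (continuousAt_const (x := x)).eventually_lt continuous_fst.continuousAt h
  filter_upwards [this] with y hy
  simp [psiAux, not_lt.mpr hy.le]

lemma not_diff_lieBracket {x : ℝ × ℝ × ℝ} (h : x.1 = 0) :
    ¬ DifferentiableAt ℝ (lieBracket fEx gEx) x := by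
  intro hd
  have hx : ((0:ℝ), x.2) = x := by rw [← h]
  have hd' : DifferentiableAt ℝ (lieBracket fEx gEx) ((0:ℝ), x.2) := hx ▸ hd
  have hι : DifferentiableAt ℝ (fun s : ℝ => (s, x.2)) 0 :=
    (differentiableAt_fun_id).prodMk (differentiableAt_const _)
  have hc : DifferentiableAt ℝ (fun s : ℝ => lieBracket fEx gEx (s, x.2)) 0 :=
    DifferentiableAt.comp (g := lieBracket fEx gEx) 0 hd' hι
  have hq : DifferentiableAt ℝ (fun s : ℝ => (lieBracket fEx gEx (s, x.2)).2.1) 0 :=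
    hc.snd.fst
  have h5 : DifferentiableAt ℝ
      (fun s : ℝ => 5*s + 2*(lieBracket fEx gEx (s, x.2)).2.1) 0 :=
    ((differentiableAt_fun_id).const_mul 5).add (hq.const_mul 2)
  have heq : (fun s : ℝ => |s|) =
      fun s : ℝ => 5*s + 2*(lieBracket fEx gEx (s, x.2)).2.1 := by
    funext s
    rw [lieBracket_fg]
    by_cases hs : s < 0
    · rw [abs_of_neg hs]; simp [psiAux, hs]; ring
    · rw [abs_of_nonneg (not_lt.mp hs)]; simp [psiAux, hs]; ring
  exact not_differentiableAt_abs_zero (by rw [show (abs : ℝ → ℝ) = _ from heq]; exact h5)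

lemma pEx_linear : IsLinearMap ℝ pEx := by
  constructor
  · intro a b; simp [pEx]; ring
  · intro c a; simp [pEx]; ring

lemma key (t : ℝ) :
    IsLeast {r : ℝ | ∃ v ∈ setLieBracket3 fEx gEx gEx (xbar t), r = pEx v} 4 := by
  constructor
  · -- membership: the witness v = (0, (-2, 0))
    refine ⟨((0:ℝ), ((-2:ℝ), (0:ℝ))), ?_, by norm_num [pEx]⟩
    apply subset_convexHull
    refine ⟨fun k => (1/(k+1 : ℝ), ((0:ℝ), -4 + t)), fun _ => xbar t, ?_, ?_, ?_, ?_, ?_⟩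
    · intro k
      exact (hasFDerivAt_lieBracket_pos (by positivity)).differentiableAt
    · intro k; exact differentiableAt_const _
    · have h1 : Tendsto (fun k : ℕ => 1/(k+1 : ℝ)) atTop (𝓝 0) :=
        tendsto_one_div_add_atTop_nhds_zero_nat
      exact h1.prodMk_nhds tendsto_const_nhds
    · exact tendsto_const_nhds
    · have : (fun k : ℕ =>
          fderiv ℝ (lieBracket fEx gEx) ((1/(k+1 : ℝ), ((0:ℝ), -4 + t))) (gEx (xbar t)) -
          fderiv ℝ gEx (xbar t) (lieBracket fEx gEx ((1/(k+1 : ℝ), ((0:ℝ), -4 + t))))) =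
          fun _ : ℕ => ((0:ℝ), ((-2:ℝ), (0:ℝ))) := by
        funext k
        rw [(hasFDerivAt_lieBracket_pos (x := ((1/(k+1 : ℝ), ((0:ℝ), -4 + t))))
          (by positivity)).fderiv,
          show fderiv ℝ gEx (xbar t) = 0 from fderiv_const_apply _]
        simp [Dmap, fst3, gEx, Prod.ext_iff]
      rw [this]
      exact tendsto_const_nhds
  · -- lower bound
    rintro r ⟨v, hv, rfl⟩
    have hsub : setLieBracket3 fEx gEx gEx (xbar t) ⊆ {w | 4 ≤ pEx w} := by
      apply convexHull_min _ (convex_halfSpace_ge pEx_linear 4)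
      rintro v ⟨u, w, hu, hw, hut, hwt, hlim⟩
      have hbound : ∀ k, 4 ≤ pEx
          (fderiv ℝ (lieBracket fEx gEx) (u k) (gEx (w k)) -
           fderiv ℝ gEx (w k) (lieBracket fEx gEx (u k))) := by
        intro k
        have hne : (u k).1 ≠ 0 := fun h0 => not_diff_lieBracket h0 (hu k)
        rw [show fderiv ℝ gEx (w k) = 0 from fderiv_const_apply _]
        rcases hne.lt_or_gt with hlt | hgt
        · rw [(hasFDerivAt_lieBracket_neg hlt).fderiv]
          norm_num [Dmap, fst3, gEx, pEx]
        · rw [(hasFDerivAt_lieBracket_pos hgt).fderiv]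
          norm_num [Dmap, fst3, gEx, pEx]
      have hcont : Continuous pEx := by unfold pEx; fun_prop
      have : Tendsto (fun k => pEx
          (fderiv ℝ (lieBracket fEx gEx) (u k) (gEx (w k)) -
           fderiv ℝ gEx (w k) (lieBracket fEx gEx (u k)))) atTop (𝓝 (pEx v)) :=
        (hcont.continuousAt.tendsto).comp hlim
      exact ge_of_tendsto this (Eventually.of_forall hbound)
    exact hsub hv

theorem stmt_14 :
    (∀ t ∈ Icc (0:ℝ) 4, pEx (lieBracket fEx gEx (xbar t)) = 0) ∧
    (∀ t ∈ Icc (0:ℝ) 4,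
      IsLeast {r : ℝ | ∃ v ∈ setLieBracket3 fEx gEx gEx (xbar t), r = pEx v} 4) ∧
    (∀ t ∈ Icc (0:ℝ) 4,
      ¬ (0 ≥ sInf {r : ℝ | ∃ v ∈ setLieBracket3 fEx gEx gEx (xbar t), r = pEx v})) := by
  refine ⟨fun t _ => ?_, fun t _ => key t, fun t _ => ?_⟩
  · rw [lieBracket_fg]
    norm_num [xbar, psiAux, pEx]
  · rw [(key t).csInf_eq]
    norm_num
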